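/- arXiv:1408.1211 — 9 statements merged into one kernel-verified Lean document; each statement's English description precedes it below -/
import Mathlib

section
/- A set function f : 2^M → ℝ≥0 is MPH-k if and only if f is monotone and for every S ⊆ M, the restriction f_S admits a positive lower envelope of rank k, i.e., a PH-k function g on 2^S with g(S) = f(S) and g(S') ≤ f(S') for all S' ⊆ S. -/
open Finset

universe u

/-- `v` is a PH-`k` function: it has a nonnegative hypergraph representation of rank at most `k`. -/
def IsPH {ι : Type u} (k : ℕ) (v : Finset ι → ℝ) : Prop :=
  ∃ h : Finset ι → ℝ, (∀ T, 0 ≤ h T) ∧ h ∅ = 0 ∧ (∀ T, k < T.card → h T = 0) ∧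
    ∀ S, v S = ∑ T ∈ S.powerset, h T

/-- `v` is MPH-`k`: it is the pointwise (attained) maximum of a family of PH-`k` functions. -/
def IsMPH {ι : Type u} (k : ℕ) (v : Finset ι → ℝ) : Prop :=
  ∃ (L : Type u) (g : L → Finset ι → ℝ),
    (∀ ℓ, IsPH k (g ℓ)) ∧ (∀ ℓ S, g ℓ S ≤ v S) ∧ ∀ S, ∃ ℓ, g ℓ S = v S

/-- A set function is MPH-`k` iff it is monotone and every restriction admits a
positive lower envelope of rank `k` (a PH-`k` function supported inside `S` agreeing
with `f` at `S` and never overestimating `f` on subsets of `S`). -/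
theorem MPH_iff_monotone_PLE {ι : Type u} (k : ℕ) (f : Finset ι → ℝ) :
    IsMPH k f ↔
      ((∀ S T : Finset ι, S ⊆ T → f S ≤ f T) ∧
        ∀ S : Finset ι, ∃ h : Finset ι → ℝ,
          (∀ T, 0 ≤ h T) ∧ h ∅ = 0 ∧ (∀ T, k < T.card → h T = 0) ∧
          (∀ T, ¬ T ⊆ S → h T = 0) ∧
          (∑ T ∈ S.powerset, h T) = f S ∧
          ∀ S' : Finset ι, S' ⊆ S → ∑ T ∈ S'.powerset, h T ≤ f S') := by
  classical
  constructor
  · rintro ⟨L, g, hPH, hle, hmax⟩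
    constructor
    · intro S T hST
      obtain ⟨ℓ, hℓ⟩ := hmax S
      obtain ⟨h, h0, -, -, hrep⟩ := hPH ℓ
      calc f S = g ℓ S := hℓ.symm
        _ ≤ g ℓ T := by
            rw [hrep, hrep]
            exact Finset.sum_le_sum_of_subset_of_nonneg
              (Finset.powerset_mono.2 hST) (fun i _ _ => h0 i)
        _ ≤ f T := hle ℓ T
    · intro S
      obtain ⟨ℓ, hℓ⟩ := hmax S
      obtain ⟨h, h0, hemp, hk, hrep⟩ := hPH ℓ
      have key : ∀ S' : Finset ι, S' ⊆ S →
          ∑ T ∈ S'.powerset, (if T ⊆ S then h T else 0) = ∑ T ∈ S'.powerset, h T := by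
        intro S' hS'
        refine Finset.sum_congr rfl fun T hT => ?_
        rw [if_pos ((Finset.mem_powerset.1 hT).trans hS')]
      refine ⟨fun T => if T ⊆ S then h T else 0, ?_, ?_, ?_, ?_, ?_, ?_⟩
      · intro T; dsimp only; split
        · exact h0 T
        · exact le_refl 0
      · dsimp only; rw [if_pos (Finset.empty_subset S), hemp]
      · intro T hT; dsimp only; split
        · exact hk T hT
        · rfl
      · intro T hT; dsimp only; rw [if_neg hT]
      · rw [key S Finset.Subset.rfl, ← hrep, hℓ]
      · intro S' hS'
        rw [key S' hS', ← hrep]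
        exact (hle ℓ S').trans_eq rfl
  · rintro ⟨hmono, hPLE⟩
    choose h h0 hemp hk hsupp hS hle using hPLE
    refine ⟨Finset ι, fun S X => ∑ T ∈ X.powerset, h S T, ?_, ?_, ?_⟩
    · intro S; exact ⟨h S, h0 S, hemp S, hk S, fun _ => rfl⟩
    · intro S X
      have key : ∑ T ∈ (X ∩ S).powerset, h S T = ∑ T ∈ X.powerset, h S T := by
        refine Finset.sum_subset (Finset.powerset_mono.2 Finset.inter_subset_left) ?_
        intro T hT hT'
        refine hsupp S T fun hTS => hT' ?_
        exact Finset.mem_powerset.2 (Finset.subset_inter (Finset.mem_powerset.1 hT) hTS)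
      show (∑ T ∈ X.powerset, h S T) ≤ f X
      rw [← key]
      calc ∑ T ∈ (X ∩ S).powerset, h S T ≤ f (X ∩ S) :=
            hle S (X ∩ S) Finset.inter_subset_right
        _ ≤ f X := hmono _ _ Finset.inter_subset_left
    · intro S; exact ⟨S, hS S⟩
end

section
/- Every MPH-k valuation is k-fractionally subadditive: if (a_T)_{T∈𝒯} is a fractional cover of all subsets of S of size at most k (i.e., for every s ⊆ S with |s| ≤ k, ∑_{T ∈ 𝒯 : T ⊇ s} a_T ≥ 1, with a_T ≥ 0), then v(S) ≤ ∑_{T∈𝒯} a_T · v(T). -/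
open Finset

universe u

/-- Every MPH-`k` valuation is `k`-fractionally subadditive: for any fractional cover
of all subsets of `S` of size at most `k`, `v S ≤ ∑_T a_T · v T`. -/
theorem MPH_k_fractionally_subadditive {ι : Type u} [DecidableEq ι] (k : ℕ)
    (v : Finset ι → ℝ) (hv : IsMPH k v) (S : Finset ι)
    (𝒯 : Finset (Finset ι)) (h𝒯 : ∀ T ∈ 𝒯, T ⊆ S)
    (a : Finset ι → ℝ) (ha : ∀ T ∈ 𝒯, 0 ≤ a T)
    (hcover : ∀ s : Finset ι, s ⊆ S → s.card ≤ k →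
      1 ≤ ∑ T ∈ 𝒯.filter (fun T => s ⊆ T), a T) :
    v S ≤ ∑ T ∈ 𝒯, a T * v T := by
  obtain ⟨L, g, hPH, hle, hmax⟩ := hv
  obtain ⟨ℓ, hℓ⟩ := hmax S
  obtain ⟨h, hpos, hempty, hcard, hrep⟩ := hPH ℓ
  have key : v S = ∑ s ∈ S.powerset, h s := by rw [← hℓ, hrep]
  rw [key]
  have step1 : ∑ s ∈ S.powerset, h s ≤
      ∑ s ∈ S.powerset, ∑ T ∈ 𝒯, (if s ⊆ T then h s * a T else 0) := by
    apply Finset.sum_le_sum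
    intro s hs
    rw [Finset.mem_powerset] at hs
    by_cases hk : s.card ≤ k
    · calc h s = h s * 1 := by ring
        _ ≤ h s * ∑ T ∈ 𝒯.filter (fun T => s ⊆ T), a T :=
            mul_le_mul_of_nonneg_left (hcover s hs hk) (hpos s)
        _ = ∑ T ∈ 𝒯, (if s ⊆ T then h s * a T else 0) := by
            rw [Finset.mul_sum, Finset.sum_filter]
    · rw [hcard s (by omega)]
      simp
  refine step1.trans ?_
  rw [Finset.sum_comm]
  apply Finset.sum_le_sum
  intro T hT
  have hTS := h𝒯 T hT
  have : ∑ s ∈ S.powerset, (if s ⊆ T then h s * a T else 0)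
      = a T * ∑ s ∈ T.powerset, h s := by
    rw [Finset.sum_ite, Finset.sum_const_zero, add_zero, Finset.mul_sum]
    have hfe : S.powerset.filter (fun s => s ⊆ T) = T.powerset := by
      ext s
      simp only [Finset.mem_filter, Finset.mem_powerset]
      exact ⟨fun ⟨_, h2⟩ => h2, fun h1 => ⟨h1.trans hTS, h1⟩⟩
    rw [hfe]
    exact Finset.sum_congr rfl (fun s _ => mul_comm _ _)
  rw [this]
  exact mul_le_mul_of_nonneg_left ((hrep T).symm ▸ hle ℓ T) (ha T hT)
end

section
/- Every monotone set function whose hypergraph representation has positive rank k and whose negative hyperedges form a laminar family (of arbitrary rank) is in MPH-k. More generally, any nonnegative set function with positive rank k and laminar negative hyperedges admits a positive lower envelope of rank k. -/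
open Finset

universe u

open scoped Classical in
/-- Core construction lemma: by induction on the number of negative hyperedges. -/
lemma core_laminar {ι : Type u} [Fintype ι] [DecidableEq ι] (k n : ℕ) :
    ∀ h : Finset ι → ℝ, (Finset.univ.filter fun T => h T < 0).card ≤ n →
    h ∅ = 0 → (∀ S : Finset ι, 0 ≤ ∑ T ∈ S.powerset, h T) →
    (∀ T : Finset ι, 0 < h T → T.card ≤ k) →
    (∀ T T', h T < 0 → h T' < 0 → T ⊆ T' ∨ T' ⊆ T ∨ Disjoint T T') →
    ∃ g : Finset ι → ℝ, (∀ T, 0 ≤ g T) ∧ g ∅ = 0 ∧ (∀ T, k < T.card → g T = 0) ∧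
      (∀ S : Finset ι, ∑ T ∈ S.powerset, g T ≤ ∑ T ∈ S.powerset, h T) ∧
      (∀ S : Finset ι, (∀ T, h T ≠ 0 → T ⊆ S) →
        ∑ T ∈ S.powerset, g T = ∑ T ∈ S.powerset, h T) := by
  induction n with
  | zero =>
    intro h hcard h0 hnn hpr hlam
    have hng : ∀ T, 0 ≤ h T := by
      intro T; by_contra hc; push_neg at hc
      have hmem : T ∈ Finset.univ.filter (fun T => h T < 0) :=
        Finset.mem_filter.2 ⟨Finset.mem_univ _, hc⟩
      rw [Finset.card_eq_zero.mp (Nat.le_zero.mp hcard)] at hmem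
      exact absurd hmem (Finset.notMem_empty _)
    refine ⟨h, hng, h0, fun T hT => ?_, fun S => le_rfl, fun S _ => rfl⟩
    rcases (hng T).eq_or_lt with he | hl
    · exact he.symm
    · exact absurd (hpr T hl) (by omega)
  | succ n ih =>
    intro h hcard h0 hnn hpr hlam
    by_cases hng : ∀ T, 0 ≤ h T
    · refine ⟨h, hng, h0, fun T hT => ?_, fun S => le_rfl, fun S _ => rfl⟩
      rcases (hng T).eq_or_lt with he | hl
      · exact he.symm
      · exact absurd (hpr T hl) (by omega)
    push_neg at hng
    obtain ⟨Tw, hTwneg⟩ := hng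
    set N := Finset.univ.filter (fun T => h T < 0) with hNdef
    have hNne : N.Nonempty := ⟨Tw, Finset.mem_filter.2 ⟨Finset.mem_univ _, hTwneg⟩⟩
    obtain ⟨T0, hT0N, hT0min⟩ := N.exists_min_image Finset.card hNne
    have hT0neg : h T0 < 0 := (Finset.mem_filter.mp hT0N).2
    have hmin : ∀ T, T ⊆ T0 → T ≠ T0 → 0 ≤ h T := by
      intro T hsub hne
      by_contra hc; push_neg at hc
      have hTN : T ∈ N := Finset.mem_filter.2 ⟨Finset.mem_univ _, hc⟩
      exact hne (Finset.eq_of_subset_of_card_le hsub (hT0min T hTN))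
    set P := ∑ T ∈ T0.powerset.erase T0, h T with hPdef
    have hT0mem : T0 ∈ T0.powerset := Finset.mem_powerset_self T0
    have hsumT0 : P + h T0 = ∑ T ∈ T0.powerset, h T := Finset.sum_erase_add _ _ hT0mem
    have hP0 : 0 ≤ P := Finset.sum_nonneg fun T hT =>
      hmin T (Finset.mem_powerset.mp (Finset.mem_of_mem_erase hT)) (Finset.ne_of_mem_erase hT)
    have hPT0 : 0 ≤ P + h T0 := by rw [hsumT0]; exact hnn T0
    have hPpos : 0 < P := by linarith
    set c := (P + h T0) / P with hcdef
    have hc0 : 0 ≤ c := div_nonneg hPT0 hPpos.le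
    have hc1 : c ≤ 1 := (div_le_one hPpos).2 (by linarith)
    have hcP : c * P = P + h T0 := by
      rw [hcdef]; field_simp
    set h' : Finset ι → ℝ := fun T => if T = T0 then 0 else if T ⊆ T0 then c * h T else h T
      with hh'def
    have hT0ne : (∅ : Finset ι) ≠ T0 := by
      intro e; rw [← e, h0] at hT0neg; exact lt_irrefl _ hT0neg
    have h'0 : h' ∅ = 0 := by simp [hh'def, h0]
    have h'zero : ∀ T, h T = 0 → h' T = 0 := by intro T hT; simp [hh'def, hT]
    have dzero : ∀ T, ¬ T ⊆ T0 → h' T = h T := by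
      intro T hns
      have hne : T ≠ T0 := fun e => hns (e ▸ Finset.Subset.refl T0)
      simp only [hh'def]; rw [if_neg hne, if_neg hns]
    have h'neg : ∀ T, h' T < 0 → h T < 0 ∧ T ≠ T0 ∧ ¬ T ⊆ T0 := by
      intro T hT
      by_cases e1 : T = T0
      · simp [hh'def, e1] at hT
      by_cases e2 : T ⊆ T0
      · simp only [hh'def] at hT; rw [if_neg e1, if_pos e2] at hT
        have := mul_nonneg hc0 (hmin T e2 e1); linarith
      · simp only [hh'def] at hT; rw [if_neg e1, if_neg e2] at hT
        exact ⟨hT, e1, e2⟩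
    have h'pos : ∀ T, 0 < h' T → 0 < h T := by
      intro T hT
      by_cases e1 : T = T0
      · simp [hh'def, e1] at hT
      by_cases e2 : T ⊆ T0
      · simp only [hh'def] at hT; rw [if_neg e1, if_pos e2] at hT
        by_contra hc; push_neg at hc
        have := mul_nonpos_of_nonneg_of_nonpos hc0 hc; linarith
      · simp only [hh'def] at hT; rw [if_neg e1, if_neg e2] at hT; exact hT
    -- cardinality of negatives decreases
    have hN'sub : (Finset.univ.filter fun T => h' T < 0) ⊆ N.erase T0 := by
      intro T hT
      obtain ⟨hneg, hne, _⟩ := h'neg T (Finset.mem_filter.mp hT).2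
      exact Finset.mem_erase.2 ⟨hne, Finset.mem_filter.2 ⟨Finset.mem_univ _, hneg⟩⟩
    have hcard' : (Finset.univ.filter fun T => h' T < 0).card ≤ n := by
      have h1 := Finset.card_le_card hN'sub
      have h2 : (N.erase T0).card = N.card - 1 := Finset.card_erase_of_mem hT0N
      have h3 : 1 ≤ N.card := Finset.card_pos.2 hNne
      omega
    -- equality of sums when T0 ⊆ S
    have heq : ∀ S, T0 ⊆ S → ∑ T ∈ S.powerset, h' T = ∑ T ∈ S.powerset, h T := by
      intro S hS
      have hzero : ∑ T ∈ S.powerset, (h T - h' T) = 0 := by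
        have hd : ∑ T ∈ T0.powerset, (h T - h' T) = ∑ T ∈ S.powerset, (h T - h' T) := by
          refine Finset.sum_subset (Finset.powerset_mono.2 hS) fun T _ hT => ?_
          have hns : ¬ T ⊆ T0 := fun hc => hT (Finset.mem_powerset.2 hc)
          rw [dzero T hns]; ring
        have hd2 : (h T0 - h' T0) + ∑ T ∈ T0.powerset.erase T0, (h T - h' T)
            = ∑ T ∈ T0.powerset, (h T - h' T) := Finset.add_sum_erase _ (fun T => h T - h' T) hT0mem
        have hd3 : ∑ T ∈ T0.powerset.erase T0, (h T - h' T) = (1 - c) * P := by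
          rw [hPdef, Finset.mul_sum]
          refine Finset.sum_congr rfl fun T hT => ?_
          have hsub := Finset.mem_powerset.mp (Finset.mem_of_mem_erase hT)
          have hne := Finset.ne_of_mem_erase hT
          simp only [hh'def]; rw [if_neg hne, if_pos hsub]; ring
        have hh'T0 : h' T0 = 0 := by simp [hh'def]
        rw [← hd, ← hd2, hd3, hh'T0]
        nlinarith [hcP]
      have := Finset.sum_sub_distrib (s := S.powerset) (f := h) (g := h')
      rw [hzero] at this
      linarith [this]
    -- inequality of sums in general
    have hle : ∀ S : Finset ι, ∑ T ∈ S.powerset, h' T ≤ ∑ T ∈ S.powerset, h T := by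
      intro S
      by_cases hS : T0 ⊆ S
      · exact le_of_eq (heq S hS)
      refine Finset.sum_le_sum fun T hT => ?_
      have hTS := Finset.mem_powerset.mp hT
      have hne : T ≠ T0 := fun e => hS (e ▸ hTS)
      by_cases hsub : T ⊆ T0
      · simp only [hh'def]; rw [if_neg hne, if_pos hsub]
        have hh := hmin T hsub hne
        nlinarith
      · simp only [hh'def]; rw [if_neg hne, if_neg hsub]
    -- nonnegativity of partial sums of h'
    have h'nn : ∀ S : Finset ι, 0 ≤ ∑ T ∈ S.powerset, h' T := by
      intro S
      by_cases hS : T0 ⊆ S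
      · rw [heq S hS]; exact hnn S
      have hsub : (S \ T0).powerset ⊆ S.powerset :=
        Finset.powerset_mono.2 (Finset.sdiff_subset)
      have hsplit : ∑ T ∈ S.powerset \ (S \ T0).powerset, h' T
          + ∑ T ∈ (S \ T0).powerset, h' T = ∑ T ∈ S.powerset, h' T :=
        Finset.sum_sdiff hsub
      rw [← hsplit]
      have h1 : 0 ≤ ∑ T ∈ (S \ T0).powerset, h' T := by
        have hcongr : ∑ T ∈ (S \ T0).powerset, h' T = ∑ T ∈ (S \ T0).powerset, h T := by
          refine Finset.sum_congr rfl fun T hT => ?_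
          have hTS : T ⊆ S \ T0 := Finset.mem_powerset.mp hT
          by_cases hsub2 : T ⊆ T0
          · have hTe : T = ∅ := by
              have : T ⊆ (S \ T0) ∩ T0 := Finset.subset_inter hTS hsub2
              rw [Finset.sdiff_inter_self] at this
              exact Finset.subset_empty.mp this
            rw [hTe, h'0, h0]
          · exact dzero T hsub2
        rw [hcongr]; exact hnn _
      have h2 : 0 ≤ ∑ T ∈ S.powerset \ (S \ T0).powerset, h' T := by
        refine Finset.sum_nonneg fun T hT => ?_
        obtain ⟨hT1, hT2⟩ := Finset.mem_sdiff.mp hT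
        have hTS := Finset.mem_powerset.mp hT1
        have hnsub : ¬ T ⊆ S \ T0 := fun hc => hT2 (Finset.mem_powerset.2 hc)
        by_contra hc; push_neg at hc
        obtain ⟨hTneg', _, hnsubT0⟩ := h'neg T hc
        rcases hlam T T0 hTneg' hT0neg with hcase | hcase | hcase
        · exact hnsubT0 hcase
        · exact hS (hcase.trans hTS)
        · exact hnsub (Finset.subset_sdiff.mpr ⟨hTS, hcase⟩)
      linarith
    obtain ⟨g, g1, g2, g3, g4, g5⟩ := ih h' hcard' h'0 h'nn
      (fun T hT => hpr T (h'pos T hT))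
      (fun T T' a b => hlam T T' (h'neg T a).1 (h'neg T' b).1)
    refine ⟨g, g1, g2, g3, fun S => (g4 S).trans (hle S), fun S hSsupp => ?_⟩
    have hT0S : T0 ⊆ S := hSsupp T0 (ne_of_lt hT0neg)
    rw [g5 S (fun T hT => hSsupp T (fun e => hT (h'zero T e))), heq S hT0S]

/-- Any nonnegative set function with positive rank `k` whose negative hyperedges form a
laminar family admits a positive lower envelope of rank `k`; if moreover it is monotone
then it is MPH-`k`. -/
theorem laminar_negative_hyperedges {ι : Type u} [Fintype ι] (k : ℕ)
    (f h : Finset ι → ℝ) (h0 : h ∅ = 0)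
    (hrep : ∀ S, f S = ∑ T ∈ S.powerset, h T)
    (hnonneg : ∀ S, 0 ≤ f S)
    (hposrank : ∀ T, 0 < h T → T.card ≤ k)
    (hlaminar : ∀ T T', h T < 0 → h T' < 0 → T ⊆ T' ∨ T' ⊆ T ∨ Disjoint T T') :
    (∃ g : Finset ι → ℝ, (∀ T, 0 ≤ g T) ∧ g ∅ = 0 ∧ (∀ T, k < T.card → g T = 0) ∧
      (∑ T ∈ (Finset.univ : Finset ι).powerset, g T) = f Finset.univ ∧
      ∀ S, ∑ T ∈ S.powerset, g T ≤ f S) ∧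
    ((∀ S T : Finset ι, S ⊆ T → f S ≤ f T) → IsMPH k f) := by
  classical
  have hnn : ∀ S : Finset ι, 0 ≤ ∑ T ∈ S.powerset, h T := fun S => (hrep S) ▸ hnonneg S
  constructor
  · obtain ⟨g, g1, g2, g3, g4, g5⟩ :=
      core_laminar k ((Finset.univ.filter fun T => h T < 0).card) h le_rfl h0 hnn
        hposrank hlaminar
    refine ⟨g, g1, g2, g3, ?_, fun S => (g4 S).trans (hrep S).symm.le⟩
    rw [g5 Finset.univ (fun T _ => Finset.subset_univ T), ← hrep]
  · intro hmono
    have key : ∀ S : Finset ι, ∃ gS : Finset ι → ℝ,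
        (∀ T, 0 ≤ gS T) ∧ gS ∅ = 0 ∧ (∀ T, k < T.card → gS T = 0) ∧
        (∀ X, ∑ T ∈ X.powerset, gS T ≤ f X) ∧ ∑ T ∈ S.powerset, gS T = f S := by
      intro S
      set hS : Finset ι → ℝ := fun T => if T ⊆ S then h T else 0 with hSdef
      have hrepS : ∀ X, ∑ T ∈ X.powerset, hS T = f (X ∩ S) := by
        intro X
        rw [hrep]
        have hfil : (X ∩ S).powerset = X.powerset.filter (fun T => T ⊆ S) := by
          ext T
          simp only [Finset.mem_powerset, Finset.mem_filter, Finset.subset_inter_iff]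
        rw [hfil, Finset.sum_filter]
      have hSneg : ∀ T, hS T < 0 → h T < 0 := by
        intro T hT
        by_cases hsub : T ⊆ S
        · simpa [hSdef, hsub] using hT
        · simp [hSdef, hsub] at hT
      have hSpos : ∀ T, 0 < hS T → 0 < h T := by
        intro T hT
        by_cases hsub : T ⊆ S
        · simpa [hSdef, hsub] using hT
        · simp [hSdef, hsub] at hT
      obtain ⟨gS, g1, g2, g3, g4, g5⟩ :=
        core_laminar k ((Finset.univ.filter fun T => hS T < 0).card) hS le_rfl
          (by simp [hSdef, h0])
          (fun X => by rw [hrepS]; exact hnonneg _)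
          (fun T hT => hposrank T (hSpos T hT))
          (fun T T' a b => hlaminar T T' (hSneg T a) (hSneg T' b))
      refine ⟨gS, g1, g2, g3, fun X => ?_, ?_⟩
      · calc ∑ T ∈ X.powerset, gS T ≤ ∑ T ∈ X.powerset, hS T := g4 X
          _ = f (X ∩ S) := hrepS X
          _ ≤ f X := hmono _ _ Finset.inter_subset_left
      · have hsupp : ∀ T, hS T ≠ 0 → T ⊆ S := by
          intro T hT
          by_contra hc
          exact hT (by simp [hSdef, hc])
        rw [g5 S hsupp, hrepS, Finset.inter_self]
    choose gg p1 p2 p3 p4 p5 using key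
    exact ⟨Finset ι, fun S X => ∑ T ∈ X.powerset, gg S T,
      fun S => ⟨gg S, p1 S, p2 S, p3 S, fun X => rfl⟩,
      fun S X => p4 S X, fun S => ⟨S, p5 S⟩⟩
end

section
/- Every monotone set function with supermodular degree k is in MPH-(k+1). Concretely: if f is normalized, monotone, and every item supermodularly depends on at most k other items, then f admits a positive lower envelope of rank k+1 for every restriction to a subset. -/
open Finset

universe u

/-- `j'` supermodularly depends on `j`: there is a set `S` such that the marginal value
of `j` given `S ∪ {j'}` exceeds the marginal value of `j` given `S`. -/
def SupDep {ι : Type u} [DecidableEq ι] (f : Finset ι → ℝ) (j j' : ι) : Prop :=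
  ∃ S : Finset ι,
    f (insert j S) - f S < f (insert j (insert j' S)) - f (insert j' S)


section Aux

variable {ι : Type u}

open Classical in
/-- The supermodular dependency set of `j`. -/
noncomputable def Dset [Fintype ι] [DecidableEq ι] (f : Finset ι → ℝ) (j : ι) : Finset ι :=
  Finset.univ.filter (fun j' => j' ≠ j ∧ SupDep f j j')

lemma mem_Dset [Fintype ι] [DecidableEq ι] {f : Finset ι → ℝ} {j j' : ι} :
    j' ∈ Dset f j ↔ j' ≠ j ∧ SupDep f j j' := by
  classical
  simp [Dset]

lemma marg_mono [DecidableEq ι] (f : Finset ι → ℝ) (j : ι) (A C : Finset ι)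
    (hC : ∀ j' ∈ C, ¬ SupDep f j j') :
    f (insert j (A ∪ C)) - f (A ∪ C) ≤ f (insert j A) - f A := by
  induction C using Finset.induction_on with
  | empty => simp
  | insert a C ha ih =>
    have hna : ¬ SupDep f j a := hC a (Finset.mem_insert_self a C)
    have key : ∀ S, f (insert j (insert a S)) - f (insert a S) ≤ f (insert j S) - f S := by
      intro S
      by_contra hlt
      exact hna ⟨S, lt_of_not_ge hlt⟩
    have h1 : A ∪ insert a C = insert a (A ∪ C) := Finset.union_insert ..
    rw [h1]
    exact (key (A ∪ C)).trans (ih (fun j' hj' => hC j' (Finset.mem_insert_of_mem hj')))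

lemma marg_subset [DecidableEq ι] (f : Finset ι → ℝ) (j : ι) (A B : Finset ι) (hAB : A ⊆ B)
    (h : ∀ j' ∈ B \ A, ¬ SupDep f j j') :
    f (insert j B) - f B ≤ f (insert j A) - f A := by
  have := marg_mono f j A (B \ A) h
  rwa [Finset.union_sdiff_of_subset hAB] at this

lemma telescope [LinearOrder ι] [DecidableEq ι] (f : Finset ι → ℝ) (h0 : f ∅ = 0) (S : Finset ι) :
    f S = ∑ j ∈ S, (f (insert j (S.filter (· < j))) - f (S.filter (· < j))) := by
  classical
  induction S using Finset.strongInduction with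
  | _ S ih =>
    rcases S.eq_empty_or_nonempty with rfl | hS
    · simp [h0]
    · set j := S.max' hS with hj
      have hjS : j ∈ S := S.max'_mem hS
      have hfil : S.filter (· < j) = S.erase j := by
        ext a
        simp only [Finset.mem_filter, Finset.mem_erase]
        constructor
        · rintro ⟨ha, hlt⟩; exact ⟨ne_of_lt hlt, ha⟩
        · rintro ⟨hne, ha⟩
          exact ⟨ha, lt_of_le_of_ne (S.le_max' a ha) hne⟩
      have hsub : S.erase j ⊂ S := Finset.erase_ssubset hjS
      have hterm : f (insert j (S.filter (· < j))) - f (S.filter (· < j))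
          = f S - f (S.erase j) := by
        rw [hfil, Finset.insert_erase hjS]
      have hothers : ∀ i ∈ S.erase j,
          f (insert i (S.filter (· < i))) - f (S.filter (· < i))
            = f (insert i ((S.erase j).filter (· < i))) - f ((S.erase j).filter (· < i)) := by
        intro i hi
        have hfil2 : (S.erase j).filter (· < i) = S.filter (· < i) := by
          rw [Finset.filter_erase]
          apply Finset.erase_eq_of_notMem
          simp only [Finset.mem_filter, not_and]
          intro _
          exact not_lt.mpr (S.le_max' i (Finset.mem_of_mem_erase hi))
        rw [hfil2]
      calc f S = f (S.erase j) + (f S - f (S.erase j)) := by ring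
        _ = (∑ i ∈ S.erase j, (f (insert i ((S.erase j).filter (· < i)))
              - f ((S.erase j).filter (· < i))))
            + (f (insert j (S.filter (· < j))) - f (S.filter (· < j))) := by
              rw [← ih (S.erase j) hsub, hterm]
        _ = (∑ i ∈ S.erase j, (f (insert i (S.filter (· < i))) - f (S.filter (· < i))))
            + (f (insert j (S.filter (· < j))) - f (S.filter (· < j))) := by
              rw [Finset.sum_congr rfl hothers]
        _ = ∑ i ∈ S, (f (insert i (S.filter (· < i))) - f (S.filter (· < i))) :=
              Finset.sum_erase_add S _ hjS

theorem main_aux [Fintype ι] [LinearOrder ι] [DecidableEq ι] (k : ℕ)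
    (f : Finset ι → ℝ) (h0 : f ∅ = 0)
    (hmono : ∀ S T : Finset ι, S ⊆ T → f S ≤ f T)
    (hdeg : ∀ j : ι, (Dset f j).card ≤ k) :
    IsMPH (k + 1) f := by
  classical
  set pre : Finset ι → ι → Finset ι := fun S j => S.filter (· < j) with hpre
  set w : Finset ι → ι → ℝ := fun S j => f (insert j (pre S j)) - f (pre S j) with hw
  set e : Finset ι → ι → Finset ι := fun S j => insert j (Dset f j ∩ pre S j) with he
  have hwnonneg : ∀ S j, 0 ≤ w S j := by
    intro S j
    have := hmono (pre S j) (insert j (pre S j)) (Finset.subset_insert _ _)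
    simpa [hw] using sub_nonneg.mpr this
  have hje : ∀ S j, j ∈ e S j := fun S j => Finset.mem_insert_self _ _
  have hecard : ∀ S j, (e S j).card ≤ k + 1 := by
    intro S j
    calc (e S j).card ≤ (Dset f j ∩ pre S j).card + 1 := Finset.card_insert_le _ _
      _ ≤ k + 1 := by
          have h1 : (Dset f j ∩ pre S j).card ≤ (Dset f j).card :=
            Finset.card_le_card (Finset.inter_subset_left)
          have h2 := hdeg j
          omega
  have htel : ∀ S : Finset ι, f S = ∑ j ∈ S, w S j := by
    intro S
    simp only [hw, hpre]
    exact telescope f h0 S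
  refine ⟨Finset ι, fun S X => ∑ j ∈ S.filter (fun j => e S j ⊆ X), w S j, ?_, ?_, ?_⟩
  · -- each g S is PH-(k+1)
    intro S
    refine ⟨fun T => ∑ j ∈ S.filter (fun j => e S j = T), w S j, ?_, ?_, ?_, ?_⟩
    · intro T
      beta_reduce
      exact Finset.sum_nonneg (fun j _ => hwnonneg S j)
    · beta_reduce
      have : S.filter (fun j => e S j = (∅ : Finset ι)) = ∅ := by
        apply Finset.filter_false_of_mem
        intro j _ hcontra
        exact absurd (hcontra ▸ hje S j) (Finset.notMem_empty j)
      rw [this, Finset.sum_empty]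
    · intro T hT
      beta_reduce
      have : S.filter (fun j => e S j = T) = ∅ := by
        apply Finset.filter_false_of_mem
        intro j _ hcontra
        have := hecard S j
        rw [hcontra] at this
        omega
      rw [this, Finset.sum_empty]
    · intro X
      beta_reduce
      rw [← Finset.sum_fiberwise_of_maps_to (g := fun j => e S j)
        (t := X.powerset) (fun j hj => by
          simp only [Finset.mem_filter] at hj
          exact Finset.mem_powerset.mpr hj.2)]
      apply Finset.sum_congr rfl
      intro T hT
      have hTX : T ⊆ X := Finset.mem_powerset.mp hT
      apply Finset.sum_congr _ (fun _ _ => rfl)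
      rw [Finset.filter_filter]
      apply Finset.filter_congr
      intro j _
      constructor
      · intro h; exact h.2
      · intro h; exact ⟨h ▸ hTX, h⟩
  · -- g S X ≤ f X
    intro S X
    beta_reduce
    set P := S ∩ X with hP
    have hPX : f P ≤ f X := hmono _ _ (Finset.inter_subset_right)
    have hsubP : S.filter (fun j => e S j ⊆ X) ⊆ P := by
      intro j hj
      simp only [Finset.mem_filter] at hj
      exact Finset.mem_inter.mpr ⟨hj.1, hj.2 (hje S j)⟩
    have hWle : ∀ j ∈ S.filter (fun j => e S j ⊆ X), w S j ≤ w P j := by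
      intro j hj
      simp only [Finset.mem_filter] at hj
      have := marg_subset f j (pre P j) (pre S j)
        (Finset.filter_subset_filter _ (Finset.inter_subset_left))
      simp only [hw]
      apply this
      intro j' hj'
      simp only [Finset.mem_sdiff, Finset.mem_filter, hpre, hP, Finset.mem_inter,
        not_and] at hj'
      obtain ⟨⟨hj'S, hj'lt⟩, hnot⟩ := hj'
      intro hsd
      have hj'ne : j' ≠ j := ne_of_lt hj'lt
      have : j' ∈ Dset f j := mem_Dset.mpr ⟨hj'ne, hsd⟩
      have hj'e : j' ∈ e S j := by
        apply Finset.mem_insert_of_mem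
        exact Finset.mem_inter.mpr ⟨this, Finset.mem_filter.mpr ⟨hj'S, hj'lt⟩⟩
      have hj'X : j' ∈ X := hj.2 hj'e
      exact hnot ⟨hj'S, hj'X⟩ hj'lt
    calc ∑ j ∈ S.filter (fun j => e S j ⊆ X), w S j
        ≤ ∑ j ∈ S.filter (fun j => e S j ⊆ X), w P j := Finset.sum_le_sum hWle
      _ ≤ ∑ j ∈ P, w P j :=
          Finset.sum_le_sum_of_subset_of_nonneg hsubP (fun j _ _ => hwnonneg P j)
      _ = f P := (htel P).symm
      _ ≤ f X := hPX
  · -- attained at S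
    intro S
    refine ⟨S, ?_⟩
    beta_reduce
    have : S.filter (fun j => e S j ⊆ S) = S := by
      apply Finset.filter_true_of_mem
      intro j hj
      intro a ha
      rcases Finset.mem_insert.mp ha with rfl | h
      · exact hj
      · exact Finset.filter_subset _ _ (Finset.mem_of_mem_inter_right h)
    rw [this, ← htel]

end Aux

/-- Every normalized monotone set function of supermodular degree `k` is MPH-`(k+1)`. -/
theorem supermodular_degree_MPH {ι : Type u} [Fintype ι] [DecidableEq ι] (k : ℕ)
    (f : Finset ι → ℝ) (h0 : f ∅ = 0)
    (hmono : ∀ S T : Finset ι, S ⊆ T → f S ≤ f T)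
    (hdeg : ∀ j : ι, ({j' | j' ≠ j ∧ SupDep f j j'} : Set ι).ncard ≤ k) :
    IsMPH (k + 1) f := by
  letI linOrd : LinearOrder ι :=
    LinearOrder.lift' (fun i => (Fintype.equivFin ι) i) (Fintype.equivFin ι).injective
  refine @main_aux ι _ linOrd ‹DecidableEq ι› k f h0 hmono ?_
  intro j
  have hcoe : ((Dset f j : Finset ι) : Set ι) = {j' | j' ≠ j ∧ SupDep f j j'} := by
    ext j'
    simp [mem_Dset]
  calc (Dset f j).card = ((Dset f j : Finset ι) : Set ι).ncard :=
        (Set.ncard_coe_finset _).symm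
    _ ≤ k := by rw [hcoe]; exact hdeg j
end

section
/- Every positive hypergraph function (a set function with a nonnegative hypergraph representation) approximates the function f₁(S) = 1 for nonempty S (f₁(∅)=0) within ratio no better than m, where m is the number of items: if g is a PH function with ρ₁ ≤ g(S)/f₁(S) ≤ ρ₂ for all nonempty S, then ρ₂/ρ₁ ≥ m. -/
open Finset

/-- No positive hypergraph function can approximate `f₁` (the function equal to `1` on
every nonempty set) within a ratio better than `m`: if `ρ₁ ≤ g S / f₁ S ≤ ρ₂` for all
nonempty `S`, then `ρ₂ / ρ₁ ≥ m`. -/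
theorem PH_cannot_approximate_unit {ι : Type*} [Fintype ι] [Nonempty ι] [DecidableEq ι]
    (f₁ : Finset ι → ℝ) (hf₁ : ∀ S : Finset ι, f₁ S = if S = ∅ then 0 else 1)
    (g h : Finset ι → ℝ) (hh : ∀ T, 0 ≤ h T) (h0 : h ∅ = 0)
    (hg : ∀ S, g S = ∑ T ∈ S.powerset, h T)
    (ρ₁ ρ₂ : ℝ) (hρ₁ : 0 < ρ₁)
    (hratio : ∀ S : Finset ι, S ≠ ∅ → ρ₁ ≤ g S / f₁ S ∧ g S / f₁ S ≤ ρ₂) :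
    (Fintype.card ι : ℝ) ≤ ρ₂ / ρ₁ := by
  have hf : ∀ S : Finset ι, S ≠ ∅ → f₁ S = 1 := by
    intro S hS; rw [hf₁]; simp [hS]
  have hsing : ∀ i : ι, ρ₁ ≤ h {i} := by
    intro i
    have hne : ({i} : Finset ι) ≠ ∅ := by simp
    have := (hratio {i} hne).1
    rw [hf _ hne, div_one, hg] at this
    have hpow : ({i} : Finset ι).powerset = {∅, {i}} := by
      ext T; simp [Finset.subset_singleton_iff]
    rw [hpow] at this
    simpa [h0] using this
  -- sum of singletons ≤ g univ
  have hmono : (Fintype.card ι : ℝ) * ρ₁ ≤ g univ := by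
    rw [hg]
    have h1 : (Fintype.card ι : ℝ) * ρ₁ = ∑ i : ι, ρ₁ := by
      simp [mul_comm]
    rw [h1]
    have := Finset.sum_le_sum_of_subset_of_nonneg
      (s := Finset.univ.image (fun i : ι => ({i} : Finset ι)))
      (t := (univ : Finset ι).powerset)
      (f := h) (by intro T hT; simp) (by intro T _ _; exact hh T)
    refine le_trans ?_ this
    rw [Finset.sum_image (by intro a _ b _ hab; simpa using hab)]
    exact Finset.sum_le_sum fun i _ => hsing i
  have hne : (univ : Finset ι) ≠ ∅ := univ_nonempty.ne_empty
  have h2 := (hratio univ hne).2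
  rw [hf _ hne, div_one] at h2
  have : (Fintype.card ι : ℝ) * ρ₁ ≤ ρ₂ := le_trans hmono h2
  rw [le_div_iff₀ hρ₁]
  linarith
end

section
/- Any nonnegative set function of positive rank 1 (all positive hyperedges are singletons, negative hyperedges arbitrary) admits a positive lower envelope of rank 1: there exist nonnegative weights w_j ≤ h({j}) on items such that ∑_{j∈M} w_j = f(M) and ∑_{j∈S} w_j ≤ f(S) for all S ⊆ M. -/
open Finset

section Aux

variable {ι : Type*} [Fintype ι] [DecidableEq ι]

/-- The monotone lower envelope: minimum of `f` over supersets. -/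
noncomputable def gEnv (f : Finset ι → ℝ) (S : Finset ι) : ℝ :=
  ((univ.powerset.filter fun U => S ⊆ U).inf'
    ⟨univ, by simp⟩ f)

lemma gEnv_le (f : Finset ι → ℝ) {S U : Finset ι} (hSU : S ⊆ U) : gEnv f S ≤ f U := by
  apply Finset.inf'_le
  simp [hSU]

lemma le_gEnv (f : Finset ι → ℝ) {S : Finset ι} {c : ℝ}
    (hc : ∀ U, S ⊆ U → c ≤ f U) : c ≤ gEnv f S := by
  apply Finset.le_inf'
  intro U hU
  simp only [mem_filter, mem_powerset] at hU
  exact hc U hU.2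

lemma gEnv_exists (f : Finset ι → ℝ) (S : Finset ι) :
    ∃ U, S ⊆ U ∧ gEnv f S = f U := by
  obtain ⟨U, hU, hU'⟩ := Finset.exists_mem_eq_inf'
    (⟨univ, by simp⟩ : (univ.powerset.filter fun U => S ⊆ U).Nonempty) f
  simp only [mem_filter, mem_powerset] at hU
  exact ⟨U, hU.2, hU'⟩

lemma gEnv_mono (f : Finset ι → ℝ) {S T : Finset ι} (hST : S ⊆ T) :
    gEnv f S ≤ gEnv f T := by
  obtain ⟨U, hTU, hU⟩ := gEnv_exists f T
  rw [hU]
  exact gEnv_le f (hST.trans hTU)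

lemma gEnv_submod (f : Finset ι → ℝ)
    (hf : ∀ A B : Finset ι, f (A ∪ B) + f (A ∩ B) ≤ f A + f B) (A B : Finset ι) :
    gEnv f (A ∪ B) + gEnv f (A ∩ B) ≤ gEnv f A + gEnv f B := by
  obtain ⟨UA, hA, hA'⟩ := gEnv_exists f A
  obtain ⟨UB, hB, hB'⟩ := gEnv_exists f B
  have h1 : gEnv f (A ∪ B) ≤ f (UA ∪ UB) :=
    gEnv_le f (union_subset_union hA hB)
  have h2 : gEnv f (A ∩ B) ≤ f (UA ∩ UB) :=
    gEnv_le f (inter_subset_inter hA hB)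
  have := hf UA UB
  rw [hA', hB']
  linarith

end Aux

/-- Any nonnegative set function of positive rank 1 admits a positive lower envelope of
rank 1: nonnegative weights `w j ≤ h {j}` with `∑_{j∈M} w j = f M` and
`∑_{j∈S} w j ≤ f S` for all `S`. -/
theorem positive_rank_one_PLE {ι : Type*} [Fintype ι] [DecidableEq ι]
    (f h : Finset ι → ℝ) (h0f : f ∅ = 0) (hnonneg : ∀ S, 0 ≤ f S)
    (h0 : h ∅ = 0) (hrep : ∀ S : Finset ι, f S = ∑ T ∈ S.powerset, h T)
    (hposrank : ∀ T : Finset ι, 2 ≤ T.card → h T ≤ 0) :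
    ∃ w : ι → ℝ, (∀ j, 0 ≤ w j) ∧ (∀ j, w j ≤ h {j}) ∧
      (∑ j, w j) = f Finset.univ ∧ ∀ S : Finset ι, ∑ j ∈ S, w j ≤ f S := by
  classical
  -- f is submodular
  have fsub : ∀ A B : Finset ι, f (A ∪ B) + f (A ∩ B) ≤ f A + f B := by
    intro A B
    rw [hrep (A ∪ B), hrep (A ∩ B), hrep A, hrep B]
    have hpow_inter : (A ∩ B).powerset = A.powerset ∩ B.powerset := by
      ext T
      simp only [mem_powerset, mem_inter]
      exact Finset.subset_inter_iff
    have hpow_union : A.powerset ∪ B.powerset ⊆ (A ∪ B).powerset := by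
      intro T hT
      simp only [mem_union, mem_powerset] at hT ⊢
      rcases hT with hT | hT
      · exact hT.trans subset_union_left
      · exact hT.trans subset_union_right
    have hsum : ∑ T ∈ A.powerset, h T + ∑ T ∈ B.powerset, h T =
        ∑ T ∈ A.powerset ∪ B.powerset, h T + ∑ T ∈ A.powerset ∩ B.powerset, h T :=
      (Finset.sum_union_inter).symm
    rw [hsum, hpow_inter]
    have key : ∑ T ∈ (A ∪ B).powerset, h T ≤ ∑ T ∈ A.powerset ∪ B.powerset, h T := by
      rw [← Finset.sum_sdiff hpow_union]
      have : ∑ T ∈ (A ∪ B).powerset \ (A.powerset ∪ B.powerset), h T ≤ 0 := by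
        apply Finset.sum_nonpos
        intro T hT
        simp only [mem_sdiff, mem_union, mem_powerset, not_or] at hT
        obtain ⟨hTAB, hTA, hTB⟩ := hT
        obtain ⟨x, hxT, hxA⟩ := Finset.not_subset.mp hTA
        obtain ⟨y, hyT, hyB⟩ := Finset.not_subset.mp hTB
        have hxB : x ∈ B := by
          rcases Finset.mem_union.mp (hTAB hxT) with hx | hx
          · exact absurd hx hxA
          · exact hx
        have hyA : y ∈ A := by
          rcases Finset.mem_union.mp (hTAB hyT) with hy | hy
          · exact hy
          · exact absurd hy hyB
        have hxy : x ≠ y := fun e => hxA (e ▸ hyA)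
        apply hposrank
        calc 2 = ({x, y} : Finset ι).card := (Finset.card_pair hxy).symm
          _ ≤ T.card := Finset.card_le_card (by
              intro z hz
              rcases Finset.mem_insert.mp hz with rfl | hz
              · exact hxT
              · rw [Finset.mem_singleton.mp hz]; exact hyT)
      linarith
    linarith
  set g := gEnv f with hg
  have hgle : ∀ S, g S ≤ f S := fun S => gEnv_le f (subset_refl S)
  have hgnonneg : ∀ S, 0 ≤ g S := by
    intro S
    obtain ⟨U, _, hU⟩ := gEnv_exists f S
    rw [hg, hU]; exact hnonneg U
  have hg0 : g ∅ = 0 := le_antisymm (by rw [← h0f]; exact hgle ∅) (hgnonneg ∅)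
  have hguniv : g univ = f univ := by
    refine le_antisymm (hgle univ) (le_gEnv f ?_)
    intro U hU
    rw [Finset.univ_subset_iff.mp hU]
  have gsub : ∀ A B : Finset ι, g (A ∪ B) + g (A ∩ B) ≤ g A + g B :=
    gEnv_submod f fsub
  set e := Fintype.equivFin ι with he
  set P : ℕ → Finset ι := fun k => univ.filter fun i => ((e i : ℕ) < k) with hP
  set w : ι → ℝ := fun j => g (P ((e j : ℕ) + 1)) - g (P (e j)) with hw
  have hPmono : ∀ k, P k ⊆ P (k + 1) := by
    intro k i hi
    simp only [hP, mem_filter, mem_univ, true_and] at hi ⊢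
    omega
  have hPsucc : ∀ j : ι, P ((e j : ℕ) + 1) = insert j (P (e j)) := by
    intro j
    ext i
    simp only [hP, mem_filter, mem_univ, true_and, mem_insert]
    constructor
    · intro hi
      rcases Nat.lt_succ_iff_lt_or_eq.mp hi with hi | hi
      · exact Or.inr (by simpa using hi)
      · left
        have : e i = e j := Fin.ext hi
        exact e.injective this
    · rintro (rfl | hi)
      · omega
      · omega
  have hjnotP : ∀ j : ι, j ∉ P (e j) := by
    intro j hj
    have := (Finset.mem_filter.mp hj).2
    omega
  have hwnonneg : ∀ j, 0 ≤ w j := by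
    intro j
    simp only [hw, sub_nonneg]
    exact gEnv_mono f (hPmono _)
  have hwle : ∀ j, w j ≤ g {j} := by
    intro j
    have := gsub (P (e j)) {j}
    have hu : P (e j) ∪ {j} = P ((e j : ℕ) + 1) := by
      rw [hPsucc j, Finset.union_comm]
      rw [Finset.insert_eq]
    have hi : P (e j) ∩ {j} = ∅ := by
      apply Finset.eq_empty_of_forall_notMem
      intro x hx
      simp only [mem_inter, mem_singleton] at hx
      exact hjnotP j (hx.2 ▸ hx.1)
    rw [hu, hi, hg0] at this
    simp only [hw]
    linarith
  have hfsing : ∀ j : ι, f {j} = h {j} := by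
    intro j
    have hps : ({j} : Finset ι).powerset = {∅, {j}} := by
      ext T
      simp [Finset.subset_singleton_iff]
    rw [hrep {j}, hps, Finset.sum_pair (Ne.symm (Finset.singleton_ne_empty j)), h0, zero_add]
  -- partial sums bounded by g
  have Hsum : ∀ S : Finset ι, ∑ j ∈ S, w j ≤ g S := by
    intro S
    induction S using Finset.strongInduction with
    | _ S ih =>
      rcases S.eq_empty_or_nonempty with rfl | hS
      · simp [hg0]
      · obtain ⟨j, hjS, hjmax⟩ := S.exists_max_image (fun i => ((e i : ℕ))) hS
        have hsubP : S.erase j ⊆ P (e j) := by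
          intro i hi
          obtain ⟨hij, hiS⟩ := Finset.mem_erase.mp hi
          simp only [hP, mem_filter, mem_univ, true_and]
          have hle := hjmax i hiS
          have : (e i : ℕ) ≠ (e j : ℕ) := by
            intro hcon
            exact hij (e.injective (Fin.ext hcon))
          omega
        have hA : S ∪ P (e j) = P ((e j : ℕ) + 1) := by
          rw [hPsucc j]
          apply Finset.Subset.antisymm
          · apply Finset.union_subset
            · intro i hi
              by_cases hij : i = j
              · subst hij; exact Finset.mem_insert_self i _
              · exact Finset.mem_insert_of_mem (hsubP (Finset.mem_erase.mpr ⟨hij, hi⟩))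
            · exact Finset.subset_insert _ _
          · apply Finset.insert_subset (Finset.mem_union_left _ hjS)
            exact Finset.subset_union_right
        have hB : S ∩ P (e j) = S.erase j := by
          ext i
          simp only [mem_inter, mem_erase, hP, mem_filter, mem_univ, true_and]
          constructor
          · rintro ⟨hiS, hilt⟩
            refine ⟨fun hcon => ?_, hiS⟩
            subst hcon; omega
          · rintro ⟨hij, hiS⟩
            refine ⟨hiS, ?_⟩
            have hle := hjmax i hiS
            have : (e i : ℕ) ≠ (e j : ℕ) := by
              intro hcon
              exact hij (e.injective (Fin.ext hcon))
            omega
        have hsubmod := gsub S (P (e j))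
        rw [hA, hB] at hsubmod
        have hih := ih (S.erase j) (Finset.erase_ssubset hjS)
        have hsum : ∑ i ∈ S, w i = w j + ∑ i ∈ S.erase j, w i :=
          (Finset.add_sum_erase S w hjS).symm
        rw [hsum]
        simp only [hw]
        linarith
  refine ⟨w, hwnonneg, ?_, ?_, ?_⟩
  · intro j
    calc w j ≤ g {j} := hwle j
      _ ≤ f {j} := hgle {j}
      _ = h {j} := hfsing j
  · -- total sum telescopes
    have h1 : ∑ j, w j = ∑ k : Fin (Fintype.card ι),
        (g (P ((k : ℕ) + 1)) - g (P (k : ℕ))) := by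
      apply Fintype.sum_equiv e
      intro j
      rfl
    rw [h1, Fin.sum_univ_eq_sum_range (fun k => g (P (k + 1)) - g (P k))]
    rw [Finset.sum_range_sub (fun k => g (P k))]
    have hP0 : P 0 = ∅ := by
      apply Finset.eq_empty_of_forall_notMem
      intro i hi
      simp [hP] at hi
    have hPn : P (Fintype.card ι) = univ := by
      apply Finset.eq_univ_of_forall
      intro i
      simp only [hP, mem_filter, mem_univ, true_and]
      exact (e i).isLt
    rw [hP0, hPn, hg0, hguniv, sub_zero]
  · intro S
    exact (Hsum S).trans (hgle S)
end

section
/- For every k ∈ ℕ, there exists a nonnegative set function of hypergraph rank 2 that has no positive lower envelope of rank k. Concretely, on a ground set of m ≥ k+3 items with a special item j, define h({j}) = C(k+1,2), h({i}) = 0 for i ≠ j, h(e) = 1 for rank-2 edges not containing j and h(e) = −k for rank-2 edges containing j, and h = 0 otherwise; then the resulting function f is nonnegative but admits no positive lower envelope of rank ≤ k. -/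
open Finset

/-- For every `k`, on a ground set of `m ≥ k+3` items with a special item `j`, the
nonnegative rank-2 set function with `h {j} = C(k+1,2)`, `h = −k` on pairs containing
`j`, `h = 1` on pairs not containing `j`, and `h = 0` otherwise, admits no positive
lower envelope of rank `k`. -/
theorem no_PLE_rank_k_example {ι : Type*} [Fintype ι] [DecidableEq ι]
    (k : ℕ) (hm : k + 3 ≤ Fintype.card ι) (j : ι)
    (h : Finset ι → ℝ)
    (hdef : ∀ T : Finset ι, h T =
      if T = {j} then ((k + 1).choose 2 : ℝ)
      else if T.card = 2 ∧ j ∈ T then -(k : ℝ)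
      else if T.card = 2 then 1 else 0)
    (f : Finset ι → ℝ) (fdef : ∀ S : Finset ι, f S = ∑ T ∈ S.powerset, h T) :
    (∀ S, 0 ≤ f S) ∧
    ¬ ∃ w : Finset ι → ℝ, (∀ T, 0 ≤ w T) ∧ w ∅ = 0 ∧ (∀ T, k < T.card → w T = 0) ∧
      (∑ T ∈ (Finset.univ : Finset ι).powerset, w T) = f Finset.univ ∧
      ∀ S : Finset ι, ∑ T ∈ S.powerset, w T ≤ f S := by
  classical
  -- the filter of pairs avoiding j
  have hpow_ne : ∀ S : Finset ι,
      (S.powerset.filter (fun T => T.card = 2 ∧ j ∉ T)) = (S.erase j).powersetCard 2 := by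
    intro S
    ext T
    simp only [mem_filter, mem_powerset, mem_powersetCard, Finset.subset_erase]
    tauto
  -- count of pairs containing j
  have hcount : ∀ S : Finset ι,
      (S.powerset.filter (fun T => T.card = 2 ∧ j ∈ T)).card
        = if j ∈ S then (S.erase j).card else 0 := by
    intro S
    by_cases hj : j ∈ S
    · simp only [hj, if_true]
      have hpart := Finset.card_filter_add_card_filter_not
        (s := S.powerset.filter (fun T => T.card = 2)) (p := fun T => j ∈ T)
      rw [Finset.filter_filter, Finset.filter_filter] at hpart
      have h1 : (S.powerset.filter (fun T => T.card = 2)).card = S.card.choose 2 := by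
        rw [← Finset.powersetCard_eq_filter, Finset.card_powersetCard]
      have h2 : (S.powerset.filter (fun T => T.card = 2 ∧ j ∉ T)).card
          = (S.erase j).card.choose 2 := by
        rw [hpow_ne S, Finset.card_powersetCard]
      have he : (S.erase j).card = S.card - 1 := Finset.card_erase_of_mem hj
      have hS1 : 1 ≤ S.card := Finset.card_pos.mpr ⟨j, hj⟩
      have hch : ((S.erase j).card + 1).choose 2 = (S.erase j).card + (S.erase j).card.choose 2 := by
        rw [Nat.choose_succ_succ, Nat.choose_one_right]
      have hSc : S.card = (S.erase j).card + 1 := by omega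
      rw [hSc] at h1
      omega
    · simp only [hj, if_false, Finset.card_eq_zero]
      rw [Finset.filter_eq_empty_iff]
      intro T hT
      simp only [mem_powerset] at hT
      rintro ⟨-, hjT⟩
      exact hj (hT hjT)
  -- the key formula for f
  have hf : ∀ S : Finset ι, f S =
      (if j ∈ S then (((k+1).choose 2 : ℝ) - k * ((S.erase j).card : ℝ)) else 0)
        + ((S.erase j).card.choose 2 : ℝ) := by
    intro S
    rw [fdef]
    have hsplit : ∀ T ∈ S.powerset, h T =
        (if T = {j} then (((k+1).choose 2 : ℝ)) else 0)
        + (if T.card = 2 ∧ j ∈ T then (-(k:ℝ)) else 0)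
        + (if T.card = 2 ∧ j ∉ T then (1:ℝ) else 0) := by
      intro T _
      rw [hdef]
      by_cases h1 : T = {j}
      · subst h1; simp
      · by_cases h2 : T.card = 2
        · by_cases h3 : j ∈ T <;> simp [h1, h2, h3]
        · simp [h1, h2]
    rw [Finset.sum_congr rfl hsplit, Finset.sum_add_distrib, Finset.sum_add_distrib]
    have s1 : (∑ T ∈ S.powerset, (if T = {j} then (((k+1).choose 2:ℝ)) else 0))
        = if j ∈ S then ((k+1).choose 2:ℝ) else 0 := by
      rw [Finset.sum_ite_eq' S.powerset ({j} : Finset ι) (fun _ => (((k+1).choose 2:ℝ)))]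
      simp [Finset.singleton_subset_iff]
    have s2 : (∑ T ∈ S.powerset, (if T.card = 2 ∧ j ∈ T then (-(k:ℝ)) else 0))
        = if j ∈ S then -((k:ℝ) * ((S.erase j).card : ℝ)) else 0 := by
      rw [← Finset.sum_filter, Finset.sum_const, hcount, nsmul_eq_mul]
      by_cases hj : j ∈ S <;> simp [hj] <;> ring
    have s3 : (∑ T ∈ S.powerset, (if T.card = 2 ∧ j ∉ T then (1:ℝ) else 0))
        = ((S.erase j).card.choose 2 : ℝ) := by
      rw [← Finset.sum_filter, Finset.sum_const, hpow_ne, Finset.card_powersetCard,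
        nsmul_eq_mul, mul_one]
    rw [s1, s2, s3]
    by_cases hj : j ∈ S <;> simp [hj] <;> ring
  -- nonnegativity
  have hnn : ∀ S, 0 ≤ f S := by
    intro S
    rw [hf]
    by_cases hj : j ∈ S
    · simp only [hj, if_true]
      set e := (S.erase j).card with he
      rw [Nat.cast_choose_two, Nat.cast_choose_two]
      push_cast
      rcases le_or_gt e k with hek | hek
      · have : (e:ℝ) ≤ k := by exact_mod_cast hek
        nlinarith [mul_nonneg (by linarith : (0:ℝ) ≤ (k:ℝ) - e) (by linarith : (0:ℝ) ≤ (k:ℝ) + 1 - e)]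
      · have : (k:ℝ) + 1 ≤ e := by exact_mod_cast hek
        nlinarith [mul_nonneg (by linarith : (0:ℝ) ≤ (e:ℝ) - k) (by linarith : (0:ℝ) ≤ (e:ℝ) - k - 1)]
    · simp [hj]
  refine ⟨hnn, ?_⟩
  rintro ⟨w, hw0, -, hwk, hwsum, hwle⟩
  -- f vanishes on sets of size k+1 containing j
  have hfz : ∀ S : Finset ι, j ∈ S → S.card = k + 1 → f S = 0 := by
    intro S hj hcard
    rw [hf]
    have he : (S.erase j).card = k := by
      rw [Finset.card_erase_of_mem hj, hcard]
      omega
    rw [he]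
    simp only [hj, if_true]
    rw [Nat.cast_choose_two, Nat.cast_choose_two]
    push_cast
    ring
  -- hence w vanishes everywhere
  have hzero : ∀ T : Finset ι, w T = 0 := by
    intro T
    rcases le_or_gt T.card k with hTk | hTk
    · have hins : (insert j T).card ≤ k + 1 :=
        (Finset.card_insert_le _ _).trans (by omega)
      obtain ⟨S, hTS, -, hScard⟩ := Finset.exists_subsuperset_card_eq
        (Finset.subset_univ (insert j T)) hins (by rw [Finset.card_univ]; omega)
      have hjS : j ∈ S := hTS (Finset.mem_insert_self j T)
      have hsum0 : (∑ U ∈ S.powerset, w U) ≤ 0 := by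
        have := hwle S
        rw [hfz S hjS hScard] at this
        exact this
      have hwT : w T ≤ ∑ U ∈ S.powerset, w U := by
        apply Finset.single_le_sum (fun U _ => hw0 U)
        rw [Finset.mem_powerset]
        exact (Finset.subset_insert j T).trans hTS
      linarith [hw0 T]
    · exact hwk T hTk
  -- but f univ > 0
  have huniv : 0 < f Finset.univ := by
    rw [hf]
    have hjU : j ∈ (Finset.univ : Finset ι) := Finset.mem_univ j
    simp only [hjU, if_true]
    have he : (k:ℕ) + 2 ≤ ((Finset.univ : Finset ι).erase j).card := by
      rw [Finset.card_erase_of_mem hjU, Finset.card_univ]; omega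
    set e := ((Finset.univ : Finset ι).erase j).card with hedef
    have he' : (k:ℝ) + 2 ≤ e := by exact_mod_cast he
    rw [Nat.cast_choose_two, Nat.cast_choose_two]
    push_cast
    nlinarith [mul_nonneg (by linarith : (0:ℝ) ≤ (e:ℝ) - k - 2) (by linarith : (0:ℝ) ≤ (e:ℝ) - k + 1)]
  rw [Finset.sum_eq_zero (fun T _ => hzero T)] at hwsum
  linarith
end

section
/- Canonical PLE for symmetric functions: let f : {0,…,m} → ℝ≥0 be monotone symmetric with f(0)=0, and let g_R be the symmetric PH-R function whose hypergraph representation gives each R-subset weight f(m)/C(m,R). Then f (viewed as a set function) has a positive lower envelope of rank R if and only if g_R(t) := C(t,R)·f(m)/C(m,R) ≤ f(t) for all 0 ≤ t ≤ m. -/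
open Finset

/-- Number of `t`-subsets of `U` containing a fixed subset `T`. -/
lemma count_supersets {α : Type*} [DecidableEq α] (U T : Finset α) (hT : T ⊆ U)
    (t : ℕ) (ht : T.card ≤ t) :
    ((Finset.powersetCard t U).filter (fun S => T ⊆ S)).card
      = (U.card - T.card).choose (t - T.card) := by
  classical
  rw [← Finset.card_sdiff_of_subset hT, ← Finset.card_powersetCard]
  apply Finset.card_bij' (fun S _ => S \ T) (fun A _ => A ∪ T)
  · intro S hS
    simp only [Finset.mem_filter, Finset.mem_powersetCard] at hS
    obtain ⟨⟨hSU, hScard⟩, hTS⟩ := hS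
    simp only [Finset.mem_powersetCard]
    exact ⟨Finset.sdiff_subset_sdiff hSU le_rfl, by rw [Finset.card_sdiff_of_subset hTS, hScard]⟩
  · intro A hA
    simp only [Finset.mem_powersetCard] at hA
    obtain ⟨hAU, hAcard⟩ := hA
    have hdisj : Disjoint A T := Finset.disjoint_of_subset_left hAU Finset.sdiff_disjoint
    simp only [Finset.mem_filter, Finset.mem_powersetCard]
    refine ⟨⟨Finset.union_subset (hAU.trans Finset.sdiff_subset) hT, ?_⟩,
      Finset.subset_union_right⟩
    rw [Finset.card_union_of_disjoint hdisj, hAcard]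
    omega
  · intro S hS
    simp only [Finset.mem_filter, Finset.mem_powersetCard] at hS
    exact Finset.sdiff_union_of_subset hS.2
  · intro A hA
    simp only [Finset.mem_powersetCard] at hA
    exact Finset.union_sdiff_cancel_right
      (Finset.disjoint_of_subset_left hA.1 Finset.sdiff_disjoint)

/-- Binomial ratio monotonicity: for `k ≤ R ≤ t ≤ m`,
`C(t,R)·C(m,k) ≤ C(t,k)·C(m,R)`. -/
lemma choose_ratio_mono {k R t m : ℕ} (hk : k ≤ R) (hR : R ≤ t) (ht : t ≤ m) :
    t.choose R * m.choose k ≤ t.choose k * m.choose R := by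
  have hCRk : 0 < R.choose k := Nat.choose_pos hk
  have h1 : t.choose R * R.choose k = t.choose k * (t - k).choose (R - k) :=
    Nat.choose_mul hk
  have h2 : m.choose R * R.choose k = m.choose k * (m - k).choose (R - k) :=
    Nat.choose_mul hk
  have key : (t - k).choose (R - k) ≤ (m - k).choose (R - k) :=
    Nat.choose_le_choose _ (Nat.sub_le_sub_right ht k)
  have : t.choose R * m.choose k * R.choose k ≤ t.choose k * m.choose R * R.choose k := by
    calc t.choose R * m.choose k * R.choose k
        = t.choose R * R.choose k * m.choose k := by ring
      _ = t.choose k * (t - k).choose (R - k) * m.choose k := by rw [h1]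
      _ ≤ t.choose k * (m - k).choose (R - k) * m.choose k := by
          exact Nat.mul_le_mul_right _ (Nat.mul_le_mul_left _ key)
      _ = t.choose k * (m.choose k * (m - k).choose (R - k)) := by ring
      _ = t.choose k * (m.choose R * R.choose k) := by rw [h2]
      _ = t.choose k * m.choose R * R.choose k := by ring
  exact Nat.le_of_mul_le_mul_right this hCRk

/-- Key counting bound: for `k ≤ R ≤ t ≤ m`,
`C(m,t)·C(t,R) ≤ C(m-k,t-k)·C(m,R)`. -/
lemma choose_count_bound {k R t m : ℕ} (hk : k ≤ R) (hR : R ≤ t) (ht : t ≤ m) :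
    m.choose t * t.choose R ≤ (m - k).choose (t - k) * m.choose R := by
  have hkm : k ≤ m := hk.trans (hR.trans ht)
  have hCmk : 0 < m.choose k := Nat.choose_pos hkm
  have hid : m.choose t * t.choose k = m.choose k * (m - k).choose (t - k) :=
    Nat.choose_mul (hk.trans hR)
  have hrat := choose_ratio_mono hk hR ht
  have key : m.choose t * t.choose R * m.choose k
      ≤ (m - k).choose (t - k) * m.choose R * m.choose k := by
    calc m.choose t * t.choose R * m.choose k
      = m.choose t * (t.choose R * m.choose k) := by ring
      _ ≤ m.choose t * (t.choose k * m.choose R) := Nat.mul_le_mul_left _ hrat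
      _ = m.choose t * t.choose k * m.choose R := by ring
      _ = m.choose k * (m - k).choose (t - k) * m.choose R := by rw [hid]
      _ = (m - k).choose (t - k) * m.choose R * m.choose k := by ring
  exact Nat.le_of_mul_le_mul_right key hCmk

/-- Canonical PLE criterion for symmetric functions: a monotone symmetric set function
`S ↦ f |S|` on `m` items has a positive lower envelope of rank `R` iff the canonical
symmetric candidate satisfies `C(t,R) · f(m)/C(m,R) ≤ f t` for all `t ≤ m`. -/
theorem symmetric_canonical_PLE {ι : Type*} [Fintype ι] (m R : ℕ)
    (hm : Fintype.card ι = m) (f : ℕ → ℝ) (hf0 : f 0 = 0)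
    (hmono : ∀ i j : ℕ, i ≤ j → j ≤ m → f i ≤ f j)
    (hnn : ∀ i : ℕ, i ≤ m → 0 ≤ f i) :
    (∃ w : Finset ι → ℝ, (∀ T, 0 ≤ w T) ∧ w ∅ = 0 ∧ (∀ T, R < T.card → w T = 0) ∧
        (∑ T ∈ (Finset.univ : Finset ι).powerset, w T) = f m ∧
        ∀ S : Finset ι, ∑ T ∈ S.powerset, w T ≤ f S.card) ↔
      ∀ t : ℕ, t ≤ m → (t.choose R : ℝ) * (f m / (m.choose R : ℝ)) ≤ f t := by
  classical
  have hcard : ∀ S : Finset ι, S.card ≤ m := fun S => hm ▸ Finset.card_le_univ S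
  have hcardu : (Finset.univ : Finset ι).card = m := by rw [Finset.card_univ, hm]
  have hfm : 0 ≤ f m := hnn m le_rfl
  constructor
  · rintro ⟨w, hw0, _, hwR, hwsum, henv⟩ t htm
    by_cases htR : t < R
    · rw [Nat.choose_eq_zero_of_lt htR]
      simpa using hnn t htm
    push_neg at htR
    have hCmR : 0 < m.choose R := Nat.choose_pos (htR.trans htm)
    have hCmt : 0 < m.choose t := Nat.choose_pos htm
    -- average the envelope constraint over all t-subsets
    have hkey : ∑ T ∈ (Finset.univ : Finset ι).powerset,
        (((Finset.powersetCard t (Finset.univ : Finset ι)).filter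
          (fun S => T ⊆ S)).card : ℝ) * w T ≤ (m.choose t : ℝ) * f t := by
      have : ∑ S ∈ Finset.powersetCard t (Finset.univ : Finset ι),
          ∑ T ∈ S.powerset, w T ≤ (m.choose t : ℝ) * f t := by
        have := Finset.sum_le_sum (fun S (hS : S ∈ Finset.powersetCard t
            (Finset.univ : Finset ι)) => by
          have hSc : S.card = t := (Finset.mem_powersetCard.1 hS).2
          calc ∑ T ∈ S.powerset, w T ≤ f S.card := henv S
            _ = f t := by rw [hSc])
        calc ∑ S ∈ Finset.powersetCard t (Finset.univ : Finset ι),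
            ∑ T ∈ S.powerset, w T ≤ ∑ _S ∈ Finset.powersetCard t
              (Finset.univ : Finset ι), f t := this
          _ = (m.choose t : ℝ) * f t := by
              rw [Finset.sum_const, Finset.card_powersetCard, hcardu, nsmul_eq_mul]
      refine le_trans (le_of_eq ?_) this
      have step1 : ∀ S : Finset ι, ∑ T ∈ S.powerset, w T
          = ∑ T ∈ (Finset.univ : Finset ι).powerset, if T ⊆ S then w T else 0 := by
        intro S
        rw [← Finset.sum_filter]
        congr 1
        ext T
        simp [Finset.mem_filter, Finset.mem_powerset, Finset.subset_univ]
      calc ∑ T ∈ (Finset.univ : Finset ι).powerset,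
            (((Finset.powersetCard t (Finset.univ : Finset ι)).filter
              (fun S => T ⊆ S)).card : ℝ) * w T
          = ∑ T ∈ (Finset.univ : Finset ι).powerset,
            ∑ S ∈ Finset.powersetCard t (Finset.univ : Finset ι),
              (if T ⊆ S then w T else 0) := by
            apply Finset.sum_congr rfl
            intro T _
            rw [← Finset.sum_filter, Finset.sum_const, nsmul_eq_mul]
        _ = ∑ S ∈ Finset.powersetCard t (Finset.univ : Finset ι),
            ∑ T ∈ (Finset.univ : Finset ι).powerset, (if T ⊆ S then w T else 0) :=
            Finset.sum_comm
        _ = ∑ S ∈ Finset.powersetCard t (Finset.univ : Finset ι),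
            ∑ T ∈ S.powerset, w T := by
            apply Finset.sum_congr rfl
            intro S _
            rw [step1 S]
    -- bound each term from below
    have hlow : ((m.choose t : ℝ) * (t.choose R : ℝ) / (m.choose R : ℝ)) * f m ≤
        ∑ T ∈ (Finset.univ : Finset ι).powerset,
          (((Finset.powersetCard t (Finset.univ : Finset ι)).filter
            (fun S => T ⊆ S)).card : ℝ) * w T := by
      rw [← hwsum, Finset.mul_sum]
      apply Finset.sum_le_sum
      intro T _
      by_cases hwT : w T = 0
      · simp [hwT]
      have hTR : T.card ≤ R := by
        by_contra h
        exact hwT (hwR T (by omega))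
      have hcnt : (((Finset.powersetCard t (Finset.univ : Finset ι)).filter
          (fun S => T ⊆ S)).card : ℝ) = ((m - T.card).choose (t - T.card) : ℝ) := by
        rw [count_supersets _ _ (Finset.subset_univ T) t (hTR.trans htR), hcardu]
      rw [hcnt]
      apply mul_le_mul_of_nonneg_right _ (hw0 T)
      rw [div_le_iff₀ (by exact_mod_cast hCmR)]
      have := choose_count_bound hTR htR htm
      calc (m.choose t : ℝ) * (t.choose R : ℝ) = ((m.choose t * t.choose R : ℕ) : ℝ) := by
            push_cast; ring
        _ ≤ (((m - T.card).choose (t - T.card) * m.choose R : ℕ) : ℝ) := by exact_mod_cast this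
        _ = ((m - T.card).choose (t - T.card) : ℝ) * (m.choose R : ℝ) := by push_cast; ring
    have := hlow.trans hkey
    have hCmt' : (0:ℝ) < (m.choose t : ℝ) := by exact_mod_cast hCmt
    rw [div_mul_eq_mul_div, mul_comm, ← div_mul_eq_mul_div] at this
    -- this : f m / C(m,R) * (C(m,t) * C(t,R)) ≤ C(m,t) * f t
    nlinarith [div_nonneg hfm (le_of_lt (show (0:ℝ) < (m.choose R : ℝ) by exact_mod_cast hCmR))]
  · intro hyp
    by_cases hR0 : R = 0
    · -- then f m = 0; take w = 0
      subst hR0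
      have h0 := hyp 0 (Nat.zero_le m)
      simp only [Nat.choose_zero_right, Nat.cast_one, one_mul, hf0] at h0
      have hfm0 : f m = 0 := by
        have : f m / (1:ℝ) ≤ 0 := by simpa using h0
        linarith [hfm, this]
      refine ⟨fun _ => 0, fun _ => le_rfl, rfl, fun _ _ => rfl, by simp [hfm0], ?_⟩
      intro S
      simpa using hnn S.card (hcard S)
    by_cases hRm : R ≤ m
    · -- canonical weights
      have hCmR : 0 < m.choose R := Nat.choose_pos hRm
      have hCmR' : (0:ℝ) < (m.choose R : ℝ) := by exact_mod_cast hCmR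
      refine ⟨fun T => if T.card = R then f m / (m.choose R : ℝ) else 0, ?_, ?_, ?_, ?_, ?_⟩
      · intro T
        dsimp only
        split
        · exact div_nonneg hfm hCmR'.le
        · exact le_rfl
      · simp [Finset.card_empty, Ne.symm hR0]
      · intro T hT
        simp [Nat.ne_of_gt hT]
      · rw [← Finset.sum_filter, ← Finset.powersetCard_eq_filter, Finset.sum_const,
          Finset.card_powersetCard, hcardu, nsmul_eq_mul]
        field_simp
      · intro S
        rw [← Finset.sum_filter, ← Finset.powersetCard_eq_filter, Finset.sum_const,
          Finset.card_powersetCard, nsmul_eq_mul]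
        exact hyp S.card (hcard S)
    · -- R > m : put all weight on univ
      push_neg at hRm
      refine ⟨fun T => if T = Finset.univ then f m else 0, ?_, ?_, ?_, ?_, ?_⟩
      · intro T
        dsimp only
        split
        · exact hfm
        · exact le_rfl
      · dsimp only
        split
        · next h =>
            have : m = 0 := by rw [← hcardu, ← h, Finset.card_empty]
            rw [this, hf0]
        · rfl
      · intro T hT
        have := hcard T
        omega
      · rw [Finset.sum_ite_eq' _ _ (fun _ => f m)]
        simp
      · intro S
        rw [Finset.sum_ite_eq' _ _ (fun _ => f m)]
        by_cases h : Finset.univ ∈ S.powerset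
        · have hS : S = Finset.univ := by
            have := Finset.mem_powerset.1 h
            exact Finset.eq_univ_iff_forall.2 fun x => this (Finset.mem_univ x)
          simp only [h, if_pos]
          rw [hS, hcardu]
        · simp only [h, if_neg, if_false]
          exact hnn S.card (hcard S)
end

section
/- The subadditive function on an even ground set of size m defined by f(S) = 1 for ∅ ≠ S ≠ M and f(M) = 2 (f(∅)=0) is not MPH-k for any k < m/2, but is MPH-(m/2). -/
open Finset

universe u

/-- The subadditive function equal to 1 on proper nonempty sets and 2 on the full even
ground set is not MPH-`k` for any `k < m/2`, but is MPH-`(m/2)`. -/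
theorem subadditive_needs_MPH_half {ι : Type u} [Fintype ι] [DecidableEq ι]
    (heven : Even (Fintype.card ι)) (f : Finset ι → ℝ)
    (hf : ∀ S : Finset ι, f S =
      if S = ∅ then 0 else if S = Finset.univ then 2 else 1) :
    (∀ S T : Finset ι, f (S ∪ T) ≤ f S + f T) ∧
    (∀ k : ℕ, k < Fintype.card ι / 2 → ¬ IsMPH k f) ∧
    IsMPH (Fintype.card ι / 2) f := by
  have hpos : ∀ X : Finset ι, 0 ≤ f X := by
    intro X; rw [hf]; split_ifs <;> norm_num
  have hone : ∀ X : Finset ι, X ≠ ∅ → 1 ≤ f X := by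
    intro X hX; rw [hf, if_neg hX]; split_ifs <;> norm_num
  have hle2 : ∀ X : Finset ι, f X ≤ 2 := by
    intro X; rw [hf]; split_ifs <;> norm_num
  have hne1 : ∀ X : Finset ι, X ≠ ∅ → X ≠ univ → f X = 1 := by
    intro X h1 h2; rw [hf]; simp [h1, h2]
  obtain ⟨t, ht⟩ := heven
  refine ⟨?_, ?_, ?_⟩
  · -- subadditivity
    intro S T
    by_cases hST : S ∪ T = ∅
    · obtain ⟨h1, h2⟩ := Finset.union_eq_empty.mp hST
      simp [hf, hST, h1, h2]
    · by_cases hS : S = ∅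
      · have hT : S ∪ T = T := by simp [hS]
        rw [hT, hf S, if_pos hS]; linarith [le_refl (f T)]
      · by_cases hT : T = ∅
        · have hS' : S ∪ T = S := by simp [hT]
          rw [hS', hf T, if_pos hT]; linarith
        · have := hone S hS
          have := hone T hT
          linarith [hle2 (S ∪ T)]
  · -- lower bound: not MPH-k for k < m/2
    rintro k hk ⟨L, g, hPH, hle, hmax⟩
    set m := Fintype.card ι with hm
    have h2k : 2 * k < m := by omega
    have hmpos : 0 < m := by omega
    have huniv_ne : (univ : Finset ι) ≠ ∅ := by
      intro h
      have : (univ : Finset ι).card = 0 := by rw [h]; simp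
      rw [Finset.card_univ] at this; omega
    have hfu : f univ = 2 := by rw [hf]; simp [huniv_ne]
    obtain ⟨ℓ, hℓ⟩ := hmax univ
    obtain ⟨h, hhpos, hemp, hrank, hsum⟩ := hPH ℓ
    have htot : ∑ T ∈ (univ : Finset ι).powerset, h T = 2 := by
      rw [← hsum, hℓ, hfu]
    -- each co-singleton value
    have herase : ∀ a : ι, g ℓ (univ.erase a)
        = ∑ T ∈ (univ : Finset ι).powerset, if a ∉ T then h T else 0 := by
      intro a
      rw [hsum, ← Finset.sum_filter]
      congr 1
      ext T
      simp [Finset.mem_powerset, Finset.subset_erase, Finset.subset_univ, And.comm]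
    have hswap : ∑ a : ι, g ℓ (univ.erase a)
        = ∑ T ∈ (univ : Finset ι).powerset, ((m - T.card : ℕ) : ℝ) * h T := by
      simp_rw [herase]
      rw [Finset.sum_comm]
      refine Finset.sum_congr rfl ?_
      intro T hT
      rw [← Finset.sum_filter]
      have hfil : (univ.filter (fun a => a ∉ T)) = Tᶜ := by
        ext a; simp [Finset.mem_compl]
      rw [Finset.sum_const, hfil, Finset.card_compl, nsmul_eq_mul]
    have hlow : ((m - k : ℕ) : ℝ) * 2 ≤ ∑ a : ι, g ℓ (univ.erase a) := by
      rw [hswap, ← htot, Finset.mul_sum]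
      refine Finset.sum_le_sum ?_
      intro T hT
      by_cases hzero : h T = 0
      · simp [hzero]
      · have hcard : T.card ≤ k := by
          by_contra hc
          exact hzero (hrank T (by omega))
        have : ((m - k : ℕ) : ℝ) ≤ ((m - T.card : ℕ) : ℝ) := by
          exact_mod_cast Nat.sub_le_sub_left hcard m
        exact mul_le_mul_of_nonneg_right this (hhpos T)
    have hhigh : ∑ a : ι, g ℓ (univ.erase a) ≤ (m : ℝ) := by
      calc ∑ a : ι, g ℓ (univ.erase a) ≤ ∑ _a : ι, (1 : ℝ) := by
            refine Finset.sum_le_sum ?_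
            intro a _
            refine le_trans (hle ℓ _) ?_
            rw [hf]
            have : univ.erase a ≠ univ := by
              intro e
              have := Finset.notMem_erase a (univ : Finset ι)
              rw [e] at this
              exact this (Finset.mem_univ a)
            split_ifs <;> norm_num
        _ = (m : ℝ) := by simp [hm]
    have hksub : k ≤ m := by omega
    rw [Nat.cast_sub hksub] at hlow
    have h2k' : (2 * k : ℝ) < (m : ℝ) := by exact_mod_cast h2k
    linarith
  · -- MPH-(m/2)
    set m := Fintype.card ι with hm
    by_cases hm0 : m = 0
    · have hie : IsEmpty ι := Fintype.card_eq_zero_iff.mp hm0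
      have hall : ∀ S : Finset ι, S = ∅ := fun S =>
        Finset.eq_empty_of_forall_notMem (fun x _ => hie.elim x)
      refine ⟨PUnit, fun _ _ => 0, ?_, ?_, ?_⟩
      · intro ℓ
        exact ⟨fun _ => 0, fun _ => le_refl 0, rfl, fun _ _ => rfl, fun S => by simp⟩
      · intro ℓ S; exact hpos S
      · intro S
        exact ⟨PUnit.unit, by rw [hf, if_pos (hall S)]⟩
    · have hm2 : 2 ≤ m := by omega
      have hhalf : 1 ≤ m / 2 := by omega
      obtain ⟨A, hAsub, hAcard⟩ :=
        Finset.exists_subset_card_eq (s := (univ : Finset ι)) (n := m / 2)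
          (by rw [Finset.card_univ]; omega)
      have hAc : Aᶜ.card = m / 2 := by
        rw [Finset.card_compl, hAcard]; omega
      have hAne : A ≠ ∅ := by
        intro e; rw [e] at hAcard; simp at hAcard; omega
      have hAcne : Aᶜ ≠ ∅ := by
        intro e; rw [e] at hAc; simp at hAc; omega
      have huniv_ne : (univ : Finset ι) ≠ ∅ := by
        intro e
        have : (univ : Finset ι).card = 0 := by rw [e]; simp
        rw [Finset.card_univ] at this; omega
      refine ⟨Option (Option ι),
        fun ℓ X => match ℓ with
          | none => 0
          | some none => (if A ⊆ X then 1 else 0) + (if Aᶜ ⊆ X then 1 else 0)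
          | some (some a) => if a ∈ X then 1 else 0, ?_, ?_, ?_⟩
      · rintro (_ | _ | a)
        · exact ⟨fun _ => 0, fun _ => le_refl 0, rfl, fun _ _ => rfl, fun S => by simp⟩
        · refine ⟨fun T => (if T = A then 1 else 0) + (if T = Aᶜ then 1 else 0),
            ?_, ?_, ?_, ?_⟩
          · intro T; dsimp only; split_ifs <;> norm_num
          · dsimp only; rw [if_neg (Ne.symm hAne), if_neg (Ne.symm hAcne)]; norm_num
          · intro T hT
            have h1 : T ≠ A := by intro e; rw [e, hAcard] at hT; omega
            have h2 : T ≠ Aᶜ := by intro e; rw [e, hAc] at hT; omega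
            dsimp only; rw [if_neg h1, if_neg h2]; norm_num
          · intro S
            rw [Finset.sum_add_distrib, Finset.sum_ite_eq' S.powerset A (fun _ => (1:ℝ)),
              Finset.sum_ite_eq' S.powerset Aᶜ (fun _ => (1:ℝ))]
            simp [Finset.mem_powerset]
        · refine ⟨fun T => if T = {a} then 1 else 0, ?_, ?_, ?_, ?_⟩
          · intro T; dsimp only; split_ifs <;> norm_num
          · dsimp only; rw [if_neg (Ne.symm (Finset.singleton_ne_empty a))]
          · intro T hT
            dsimp only
            rw [if_neg (by intro e; rw [e] at hT; simp at hT; omega)]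
          · intro S
            rw [Finset.sum_ite_eq' S.powerset ({a} : Finset ι) (fun _ => (1:ℝ))]
            simp [Finset.mem_powerset, Finset.singleton_subset_iff]
      · rintro (_ | _ | a) X
        · exact hpos X
        · simp only
          by_cases hXu : X = univ
          · subst hXu
            rw [hf, if_neg huniv_ne, if_pos rfl]
            split_ifs <;> norm_num
          · have hnot : ¬ (A ⊆ X ∧ Aᶜ ⊆ X) := by
              rintro ⟨h1, h2⟩
              apply hXu
              rw [← Finset.univ_subset_iff]
              rw [← Finset.union_compl A]
              exact Finset.union_subset h1 h2
            by_cases hXe : X = ∅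
            · subst hXe
              rw [hf, if_pos rfl]
              rw [if_neg (by simp [Finset.subset_empty, hAne]),
                if_neg (by simp [Finset.subset_empty, hAcne])]
              norm_num
            · have h1 : 1 ≤ f X := hone X hXe
              by_cases hA1 : A ⊆ X
              · rw [if_pos hA1, if_neg (fun h2 => hnot ⟨hA1, h2⟩)]; linarith
              · rw [if_neg hA1]
                split_ifs <;> linarith
        · simp only
          by_cases ha : a ∈ X
          · rw [if_pos ha]
            exact hone X (fun e => by rw [e] at ha; exact absurd ha (by simp))
          · rw [if_neg ha]; exact hpos X
      · intro S
        by_cases hSe : S = ∅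
        · refine ⟨none, ?_⟩
          rw [hf, if_pos hSe]
        · by_cases hSu : S = univ
          · refine ⟨some none, ?_⟩
            subst hSu
            dsimp only
            rw [hf, if_neg huniv_ne, if_pos rfl]
            rw [if_pos (Finset.subset_univ A), if_pos (Finset.subset_univ Aᶜ)]
            norm_num
          · obtain ⟨a, ha⟩ := Finset.nonempty_iff_ne_empty.mpr hSe
            refine ⟨some (some a), ?_⟩
            dsimp only
            rw [hne1 S hSe hSu, if_pos ha]
end
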